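/- arXiv:2604.18474 — 2 statements merged into one kernel-verified Lean document; each statement's English description precedes it below -/
import Mathlib

section
/- Under the hypotheses of the eigenvalue identity λ = -Δ(ln φ) + div(s) - |∇(ln φ) - s|² + K - F on a closed orientable surface S of genus g, if g ≥ 1 and min_S F > 0, then λ < 0. -/
open MeasureTheory

/-- under the eigenvalue identity on a closed orientable surface of genus
`g ≥ 1`, if `min_S F = μ > 0` then `λ < 0`.  Notation as in the abstraction of the
stability identity: `lapLnφ = Δ ln φ`, `divs = div s`, `normSq = |∇ ln φ - s|²`. -/
theorem stmt_1 {S : Type*} [TopologicalSpace S] [CompactSpace S] [Nonempty S]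
    [MeasurableSpace S] [BorelSpace S]
    (area : Measure S) [IsFiniteMeasure area]
    (harea : 0 < (area Set.univ).toReal)
    (g : ℕ) (hg : 1 ≤ g)
    (lapLnφ divs normSq K F : S → ℝ) (lam μ : ℝ)
    (hlapc : Continuous lapLnφ) (hdivc : Continuous divs) (hnc : Continuous normSq)
    (hKc : Continuous K) (hFc : Continuous F)
    (hnormSq : ∀ x, 0 ≤ normSq x)
    (hlap0 : ∫ x, lapLnφ x ∂area = 0)
    (hdiv0 : ∫ x, divs x ∂area = 0)
    (hGB : ∫ x, K x ∂area = 4 * Real.pi * (1 - (g : ℝ)))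
    (hid : ∀ x, lam = -lapLnφ x + divs x - normSq x + K x - F x)
    (hmin : ∀ x, μ ≤ F x) (hex : ∃ x, F x = μ)
    (hμpos : 0 < μ) :
    lam < 0 := by
  set A : ℝ := (area Set.univ).toReal with hA
  have key : ∀ {f : S → ℝ}, Continuous f → Integrable f area := fun hf =>
    integrableOn_univ.mp
      (hf.continuousOn.integrableOn_compact' isCompact_univ MeasurableSet.univ)
  have hlapI : Integrable lapLnφ area := key hlapc
  have hdivI : Integrable divs area := key hdivc
  have hnI : Integrable normSq area := key hnc
  have hKI : Integrable K area := key hKc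
  have hFI : Integrable F area := key hFc
  have h0 : Integrable (fun a => -lapLnφ a) area := hlapI.neg
  have h1 : Integrable (fun a => -lapLnφ a + divs a) area := h0.add hdivI
  have h2 : Integrable (fun a => -lapLnφ a + divs a - normSq a) area := h1.sub hnI
  have h3 : Integrable (fun a => -lapLnφ a + divs a - normSq a + K a) area := h2.add hKI
  have hconst : ∫ _x, lam ∂area = A * lam := by
    simp [integral_const, hA, smul_eq_mul, measureReal_def]
  have hsplit : ∫ x, (-lapLnφ x + divs x - normSq x + K x - F x) ∂area
      = -(∫ x, lapLnφ x ∂area) + (∫ x, divs x ∂area) - (∫ x, normSq x ∂area)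
        + (∫ x, K x ∂area) - (∫ x, F x ∂area) := by
    rw [integral_sub h3 hFI, integral_add h2 hKI, integral_sub h1 hnI,
        integral_add h0 hdivI, integral_neg]
  have hAlam : A * lam = -(∫ x, normSq x ∂area) + 4 * Real.pi * (1 - (g : ℝ))
      - (∫ x, F x ∂area) := by
    rw [← hconst]
    calc ∫ _x, lam ∂area = ∫ x, (-lapLnφ x + divs x - normSq x + K x - F x) ∂area := by
          exact integral_congr_ae (Filter.Eventually.of_forall fun x => hid x)
      _ = _ := by rw [hsplit, hlap0, hdiv0, hGB]; ring
  have hnint : 0 ≤ ∫ x, normSq x ∂area := integral_nonneg hnormSq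
  have hFint : μ * A ≤ ∫ x, F x ∂area := by
    have := integral_mono (integrable_const μ) hFI hmin
    simpa [integral_const, hA, smul_eq_mul, mul_comm, measureReal_def] using this
  have hgb : 4 * Real.pi * (1 - (g : ℝ)) ≤ 0 := by
    have : (1 : ℝ) ≤ (g : ℝ) := by exact_mod_cast hg
    nlinarith [Real.pi_pos]
  have hμA : 0 < μ * A := mul_pos hμpos harea
  have : A * lam < 0 := by linarith
  nlinarith [harea]
end

section
/- Under the hypotheses of the eigenvalue identity λ = -Δ(ln φ) + div(s) - |∇(ln φ) - s|² + K - F on a closed orientable surface S of genus 0, if μ := min_S F > 0 and Area(S) > 4π/μ, then λ < 0. -/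
open MeasureTheory

/-- under the eigenvalue identity on a closed orientable surface of genus 0,
if `μ := min_S F > 0` and `Area(S) > 4π/μ` then `λ < 0`. -/
theorem stmt_2 {S : Type*} [TopologicalSpace S] [CompactSpace S] [Nonempty S]
    [MeasurableSpace S] [BorelSpace S]
    (area : Measure S) [IsFiniteMeasure area]
    (lapLnφ divs normSq K F : S → ℝ) (lam μ : ℝ)
    (hlapc : Continuous lapLnφ) (hdivc : Continuous divs) (hnc : Continuous normSq)
    (hKc : Continuous K) (hFc : Continuous F)
    (hnormSq : ∀ x, 0 ≤ normSq x)
    (hlap0 : ∫ x, lapLnφ x ∂area = 0)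
    (hdiv0 : ∫ x, divs x ∂area = 0)
    (hGB : ∫ x, K x ∂area = 4 * Real.pi)  -- Gauss–Bonnet for genus 0
    (hid : ∀ x, lam = -lapLnφ x + divs x - normSq x + K x - F x)
    (hmin : ∀ x, μ ≤ F x) (hex : ∃ x, F x = μ)
    (hμpos : 0 < μ)
    (hA : 4 * Real.pi / μ < (area Set.univ).toReal) :
    lam < 0 := by
  have hilap : Integrable lapLnφ area :=
    hlapc.integrable_of_hasCompactSupport (HasCompactSupport.of_compactSpace _)
  have hidiv : Integrable divs area :=
    hdivc.integrable_of_hasCompactSupport (HasCompactSupport.of_compactSpace _)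
  have hin : Integrable normSq area :=
    hnc.integrable_of_hasCompactSupport (HasCompactSupport.of_compactSpace _)
  have hiK : Integrable K area :=
    hKc.integrable_of_hasCompactSupport (HasCompactSupport.of_compactSpace _)
  have hiF : Integrable F area :=
    hFc.integrable_of_hasCompactSupport (HasCompactSupport.of_compactSpace _)
  set A := (area Set.univ).toReal with hAdef
  have hApos : 0 < A := lt_trans (by positivity) hA
  have hint : ∫ x, (fun x => -lapLnφ x + divs x - normSq x + K x - F x) x ∂area
      = - ∫ x, normSq x ∂area + 4 * Real.pi - ∫ x, F x ∂area := by
    have i1 : Integrable (fun x => -lapLnφ x + divs x) area := hilap.neg.add hidiv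
    have i2 : Integrable (fun x => -lapLnφ x + divs x - normSq x) area := i1.sub hin
    have i3 : Integrable (fun x => -lapLnφ x + divs x - normSq x + K x) area := i2.add hiK
    have i0 : Integrable (fun x => -lapLnφ x) area := hilap.neg
    have e0 : ∫ x, -lapLnφ x ∂area = 0 := by rw [integral_neg, hlap0, neg_zero]
    rw [integral_sub i3 hiF, integral_add i2 hiK, integral_sub i1 hin,
      integral_add i0 hidiv, e0, hdiv0, hGB]
    ring
  have hlamint : ∫ x, (fun _ => lam) x ∂area = lam * A := by
    simp [integral_const, smul_eq_mul, mul_comm, hAdef, Measure.real]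
  have heq : lam * A = - ∫ x, normSq x ∂area + 4 * Real.pi - ∫ x, F x ∂area := by
    rw [← hlamint, ← hint]
    exact integral_congr_ae (Filter.Eventually.of_forall fun x => hid x)
  have hnint : 0 ≤ ∫ x, normSq x ∂area :=
    integral_nonneg hnormSq
  have hFint : μ * A ≤ ∫ x, F x ∂area := by
    have := integral_mono (integrable_const μ) hiF hmin
    simpa [integral_const, smul_eq_mul, mul_comm, hAdef, Measure.real] using this
  have h1 : lam * A ≤ 4 * Real.pi - μ * A := by
    rw [heq]; linarith
  have h2 : 4 * Real.pi - μ * A < 0 := by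
    have : 4 * Real.pi < μ * A := by
      rw [div_lt_iff₀ hμpos] at hA
      nlinarith
    linarith
  nlinarith
end
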